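/- arXiv:1705.06417 — 6 statements merged into one kernel-verified Lean document; each statement's English description precedes it below -/
import Mathlib

section
/- There exists a constant C₁ > 0 such that for all ν ∈ (0,1], all k = (k₁,k₂,k₃) ∈ ℤ³ with k₃ ≠ 0, and all j ∈ {1,2,3}, one has |M̂ⱼ^ν(k)| ≤ C₁ |k|. (Consequently the sup over ν ∈ (0,1] and over all such k of |M̂ⱼ^ν(k)|/|k| is bounded by C₁.) -/
set_option maxHeartbeats 800000


/-- Euclidean norm of a lattice point `k = (k₁, k₂, k₃) ∈ ℤ³`. -/
noncomputable def knorm (k : ℤ × ℤ × ℤ) : ℝ :=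
  Real.sqrt (((k.1 : ℝ)) ^ 2 + ((k.2.1 : ℝ)) ^ 2 + ((k.2.2 : ℝ)) ^ 2)

/-- Denominator `D_ν(k) = |k|²k₃² + (k₂² + ν|k|⁴)²`. -/
noncomputable def Dnu (ν : ℝ) (k : ℤ × ℤ × ℤ) : ℝ :=
  (knorm k) ^ 2 * ((k.2.2 : ℝ)) ^ 2 + (((k.2.1 : ℝ)) ^ 2 + ν * (knorm k) ^ 4) ^ 2

/-- First component of the magnetogeostrophic symbol. -/
noncomputable def Mhat1 (ν : ℝ) (k : ℤ × ℤ × ℤ) : ℝ :=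
  ((k.2.1 : ℝ) * (k.2.2 : ℝ) * (knorm k) ^ 2
    - (k.1 : ℝ) * (k.2.2 : ℝ) * (((k.2.1 : ℝ)) ^ 2 + ν * (knorm k) ^ 4)) / Dnu ν k

/-- Second component of the magnetogeostrophic symbol. -/
noncomputable def Mhat2 (ν : ℝ) (k : ℤ × ℤ × ℤ) : ℝ :=
  (-(k.1 : ℝ) * (k.2.2 : ℝ) * (knorm k) ^ 2
    - (k.2.1 : ℝ) * (k.2.2 : ℝ) * (((k.2.1 : ℝ)) ^ 2 + ν * (knorm k) ^ 4)) / Dnu ν k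

/-- Third component of the magnetogeostrophic symbol. -/
noncomputable def Mhat3 (ν : ℝ) (k : ℤ × ℤ × ℤ) : ℝ :=
  (((k.1 : ℝ) ^ 2 + (k.2.1 : ℝ) ^ 2) * (((k.2.1 : ℝ)) ^ 2 + ν * (knorm k) ^ 4)) / Dnu ν k

theorem stmt0 :
    ∃ C₁ : ℝ, 0 < C₁ ∧ ∀ ν ∈ Set.Ioc (0 : ℝ) 1, ∀ k : ℤ × ℤ × ℤ, k.2.2 ≠ 0 →
      |Mhat1 ν k| ≤ C₁ * knorm k ∧ |Mhat2 ν k| ≤ C₁ * knorm k ∧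
        |Mhat3 ν k| ≤ C₁ * knorm k := by
  refine ⟨2, by norm_num, ?_⟩
  rintro ν ⟨hν, hν1⟩ ⟨k1, k2, k3⟩ hk3
  simp only [ne_eq] at hk3
  set x : ℝ := (k1 : ℝ) with hxdef
  set y : ℝ := (k2 : ℝ) with hydef
  set z : ℝ := (k3 : ℝ) with hzdef
  have hz2 : (1 : ℝ) ≤ z ^ 2 := by
    have h1 : (1 : ℤ) ≤ k3 ^ 2 := by
      rcases lt_or_gt_of_ne hk3 with h | h <;> nlinarith
    rw [hzdef]
    exact_mod_cast h1
  have hn0 : (0 : ℝ) ≤ x ^ 2 + y ^ 2 + z ^ 2 := by positivity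
  set n : ℝ := knorm (k1, k2, k3) with hndef
  have hnsq : n ^ 2 = x ^ 2 + y ^ 2 + z ^ 2 := Real.sq_sqrt hn0
  have hnn : 0 ≤ n := Real.sqrt_nonneg _
  have hn1 : 1 ≤ n := by nlinarith
  have hx : |x| ≤ n := by nlinarith [sq_abs x, abs_nonneg x]
  have hy : |y| ≤ n := by nlinarith [sq_abs y, abs_nonneg y]
  have hz1 : 1 ≤ |z| := by nlinarith [sq_abs z, abs_nonneg z]
  set B : ℝ := y ^ 2 + ν * n ^ 4 with hBdef
  have hB : 0 < B := by positivity
  have hD : Dnu ν (k1, k2, k3) = n ^ 2 * z ^ 2 + B ^ 2 := rfl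
  have hD0 : 0 < Dnu ν (k1, k2, k3) := by rw [hD]; nlinarith
  set D : ℝ := Dnu ν (k1, k2, k3) with hDdef
  have hD1 : n ^ 2 * z ^ 2 ≤ D := by rw [hD]; nlinarith
  have hD2 : 2 * n * |z| * B ≤ D := by
    rw [hD]
    nlinarith [sq_nonneg (n * |z| - B), sq_abs z]
  have key : ∀ N : ℝ, |N| ≤ 2 * n * D → |N / D| ≤ 2 * n := by
    intro N hN
    rw [abs_div, abs_of_pos hD0, div_le_iff₀ hD0]
    exact hN
  have habs1 : |y * z * n ^ 2 - x * z * B| ≤ |y| * |z| * n ^ 2 + |x| * |z| * B := by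
    calc |y * z * n ^ 2 - x * z * B| ≤ |y * z * n ^ 2| + |x * z * B| := abs_sub _ _
    _ = |y| * |z| * n ^ 2 + |x| * |z| * B := by
        rw [abs_mul, abs_mul, abs_mul, abs_mul, abs_of_nonneg (by positivity : (0:ℝ) ≤ n ^ 2),
          abs_of_pos hB]
  have habs2 : |-x * z * n ^ 2 - y * z * B| ≤ |x| * |z| * n ^ 2 + |y| * |z| * B := by
    calc |-x * z * n ^ 2 - y * z * B| ≤ |-x * z * n ^ 2| + |y * z * B| := abs_sub _ _
    _ = |x| * |z| * n ^ 2 + |y| * |z| * B := by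
        rw [abs_mul, abs_mul, abs_mul, abs_mul, abs_neg,
          abs_of_nonneg (by positivity : (0:ℝ) ≤ n ^ 2), abs_of_pos hB]
  -- main term bounds
  have hterm1 : ∀ a b : ℝ, |a| ≤ n → |b| ≤ n → |a| * |z| * n ^ 2 + |b| * |z| * B ≤ 2 * n * D := by
    intro a b ha hb
    have hzz : |z| ≤ z ^ 2 := by nlinarith [sq_abs z, abs_nonneg z]
    have h1 : |a| * |z| * n ^ 2 ≤ n * (n ^ 2 * z ^ 2) := by
      have := mul_le_mul ha hzz (abs_nonneg z) hnn
      nlinarith [sq_nonneg n]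
    have h2 : |b| * |z| * B ≤ n * (|z| * B) := by
      have := mul_le_mul_of_nonneg_right hb (mul_nonneg (abs_nonneg z) hB.le)
      nlinarith
    have h3 : n * (n ^ 2 * z ^ 2) ≤ n * D := mul_le_mul_of_nonneg_left hD1 hnn
    have h4 : n * (2 * n * |z| * B) ≤ n * D := mul_le_mul_of_nonneg_left hD2 hnn
    nlinarith [mul_nonneg (mul_nonneg hnn (abs_nonneg z)) hB.le, hD0.le]
  refine ⟨?_, ?_, ?_⟩
  · apply key
    exact le_trans habs1 (hterm1 y x hy hx)
  · apply key
    exact le_trans habs2 (hterm1 x y hx hy)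
  · apply key
    have hxy : x ^ 2 + y ^ 2 ≤ n ^ 2 := by nlinarith
    have : |(x ^ 2 + y ^ 2) * B| = (x ^ 2 + y ^ 2) * B := by
      rw [abs_of_nonneg]; positivity
    rw [this]
    have h1 : (x ^ 2 + y ^ 2) * B ≤ n ^ 2 * B := mul_le_mul_of_nonneg_right hxy hB.le
    have h2 : n ^ 2 * B ≤ n ^ 2 * (|z| * B) := by
      nlinarith [mul_nonneg (mul_nonneg hnn hnn) hB.le, hz1, hB.le, sq_nonneg n]
    have h3 : n * (2 * n * |z| * B) ≤ n * D := mul_le_mul_of_nonneg_left hD2 hnn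
    nlinarith [hD0.le, hn1]
end

section
/- There exists a constant C₂ > 0 such that for all k = (k₁,k₂,k₃) ∈ ℤ³ with k₃ ≠ 0 and all j ∈ {1,2,3}, one has |M̂ⱼ⁰(k)| ≤ C₂ |k|, where M̂ⱼ⁰ denotes the symbol M̂ⱼ^ν evaluated at ν = 0. -/
section Aux

variable {a b c n : ℝ}

lemma aux_main (hn0 : 0 ≤ n) (hn2 : n ^ 2 = a ^ 2 + b ^ 2 + c ^ 2) (hc2 : (1 : ℝ) ≤ c ^ 2) :
    |(b * c * n ^ 2 - a * c * b ^ 2) / (n ^ 2 * c ^ 2 + b ^ 4)| ≤ 2 * n ∧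
    |(-a * c * n ^ 2 - b * c * b ^ 2) / (n ^ 2 * c ^ 2 + b ^ 4)| ≤ 2 * n ∧
    |((a ^ 2 + b ^ 2) * b ^ 2) / (n ^ 2 * c ^ 2 + b ^ 4)| ≤ 2 * n := by
  have hn1 : 1 ≤ n := by nlinarith [sq_nonneg a, sq_nonneg b]
  have haa : |a| ≤ n := by nlinarith [sq_nonneg b, sq_nonneg c, abs_nonneg a, sq_abs a]
  have hbb : |b| ≤ n := by nlinarith [sq_nonneg a, sq_nonneg c, abs_nonneg b, sq_abs b]
  have hcc : |c| ≤ n := by nlinarith [sq_nonneg a, sq_nonneg b, abs_nonneg c, sq_abs c]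
  have hcabs : 1 ≤ |c| := by nlinarith [abs_nonneg c, sq_abs c]
  set D : ℝ := n ^ 2 * c ^ 2 + b ^ 4 with hD'
  have hDpos : 0 < D := by nlinarith [sq_nonneg (b ^ 2)]
  have hamgm : 2 * n * |c| * b ^ 2 ≤ D := by
    nlinarith [sq_nonneg (n * |c| - b ^ 2), sq_abs c]
  have key : ∀ num : ℝ, |num| ≤ 2 * n * D → |num / D| ≤ 2 * n := by
    intro num h
    rw [abs_div, abs_of_pos hDpos, div_le_iff₀ hDpos]
    linarith
  have hcsq : |c| ≤ c ^ 2 := by nlinarith [sq_abs c, abs_nonneg c]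
  have hbnc : |b| ≤ n * |c| := by nlinarith
  have hanc : |a| ≤ n * |c| := by nlinarith
  have hpiece : ∀ x : ℝ, |x| ≤ n * |c| → |x| * |c| * n ^ 2 ≤ n * (n ^ 2 * c ^ 2) := by
    intro x hx
    calc |x| * |c| * n ^ 2 = |x| * (|c| * n ^ 2) := by ring
      _ ≤ (n * |c|) * (|c| * n ^ 2) :=
        mul_le_mul_of_nonneg_right hx (mul_nonneg (abs_nonneg c) (sq_nonneg n))
      _ = n * (n ^ 2 * |c| ^ 2) := by ring
      _ = n * (n ^ 2 * c ^ 2) := by rw [sq_abs]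
  have hp_b := hpiece b hbnc
  have hp_a := hpiece a hanc
  have hpiece2 : ∀ x : ℝ, |x| ≤ n → |x| * |c| * b ^ 2 ≤ n * D := by
    intro x hx
    have h1 : |x| * |c| * b ^ 2 ≤ n * (|c| * b ^ 2) := by
      calc |x| * |c| * b ^ 2 = |x| * (|c| * b ^ 2) := by ring
        _ ≤ n * (|c| * b ^ 2) :=
          mul_le_mul_of_nonneg_right hx (mul_nonneg (abs_nonneg c) (sq_nonneg b))
    have h2 : n * (|c| * b ^ 2) ≤ n * D := by
      have h3 : |c| * b ^ 2 ≤ D := by nlinarith [mul_nonneg (abs_nonneg c) (sq_nonneg b)]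
      exact mul_le_mul_of_nonneg_left h3 hn0
    linarith
  have hq_a := hpiece2 a haa
  have hq_b := hpiece2 b hbb
  have hnD : 0 ≤ n * D := mul_nonneg hn0 hDpos.le
  have hD_cmp : n * (n ^ 2 * c ^ 2) ≤ n * D := by
    have h3 : n ^ 2 * c ^ 2 ≤ D := by nlinarith [sq_nonneg (b ^ 2)]
    exact mul_le_mul_of_nonneg_left h3 hn0
  refine ⟨?_, ?_, ?_⟩
  · apply key
    have h1 : |b * c * n ^ 2 - a * c * b ^ 2| ≤ |b| * |c| * n ^ 2 + |a| * |c| * b ^ 2 := by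
      calc |b * c * n ^ 2 - a * c * b ^ 2|
          ≤ |b * c * n ^ 2| + |a * c * b ^ 2| := abs_sub _ _
        _ = |b| * |c| * n ^ 2 + |a| * |c| * b ^ 2 := by
            rw [abs_mul, abs_mul, abs_mul, abs_mul, abs_pow, abs_pow, sq_abs, sq_abs]
    linarith
  · apply key
    have h1 : |-a * c * n ^ 2 - b * c * b ^ 2| ≤ |a| * |c| * n ^ 2 + |b| * |c| * b ^ 2 := by
      calc |-a * c * n ^ 2 - b * c * b ^ 2|
          ≤ |-a * c * n ^ 2| + |b * c * b ^ 2| := abs_sub _ _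
        _ = |a| * |c| * n ^ 2 + |b| * |c| * b ^ 2 := by
            rw [abs_mul, abs_mul, abs_mul, abs_mul, abs_pow, abs_pow, sq_abs, sq_abs, abs_neg]
    linarith
  · apply key
    have h0 : |(a ^ 2 + b ^ 2) * b ^ 2| = (a ^ 2 + b ^ 2) * b ^ 2 :=
      abs_of_nonneg (by positivity)
    rw [h0]
    have hab : a ^ 2 + b ^ 2 ≤ n ^ 2 := by nlinarith [sq_nonneg c]
    rcases le_or_gt (b ^ 2) (n * |c|) with h | h
    · calc (a ^ 2 + b ^ 2) * b ^ 2 ≤ n ^ 2 * b ^ 2 :=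
            mul_le_mul_of_nonneg_right hab (sq_nonneg b)
        _ ≤ n ^ 2 * (n * |c|) := mul_le_mul_of_nonneg_left h (sq_nonneg n)
        _ = n ^ 2 * n * |c| := by ring
        _ ≤ n ^ 2 * n * c ^ 2 :=
            mul_le_mul_of_nonneg_left hcsq (by positivity)
        _ = n * (n ^ 2 * c ^ 2) := by ring
        _ ≤ n * D := hD_cmp
        _ ≤ 2 * n * D := by linarith
    · have hnc' : n ≤ n * |c| := by
        calc n = n * 1 := (mul_one n).symm
          _ ≤ n * |c| := mul_le_mul_of_nonneg_left hcabs hn0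
      have hn_le : n ≤ b ^ 2 := hnc'.trans h.le
      calc (a ^ 2 + b ^ 2) * b ^ 2 ≤ n ^ 2 * b ^ 2 :=
            mul_le_mul_of_nonneg_right hab (sq_nonneg b)
        _ = n * (n * b ^ 2) := by ring
        _ ≤ n * (b ^ 2 * b ^ 2) := by
            refine mul_le_mul_of_nonneg_left ?_ hn0
            exact mul_le_mul_of_nonneg_right hn_le (sq_nonneg b)
        _ = n * b ^ 4 := by ring
        _ ≤ n * D := by
            refine mul_le_mul_of_nonneg_left ?_ hn0
            rw [hD']
            exact le_add_of_nonneg_left (by positivity)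
        _ ≤ 2 * n * D := by linarith

end Aux

theorem stmt1 :
    ∃ C₂ : ℝ, 0 < C₂ ∧ ∀ k : ℤ × ℤ × ℤ, k.2.2 ≠ 0 →
      |Mhat1 0 k| ≤ C₂ * knorm k ∧ |Mhat2 0 k| ≤ C₂ * knorm k ∧
        |Mhat3 0 k| ≤ C₂ * knorm k := by
  refine ⟨2, by norm_num, fun k hk => ?_⟩
  have hn0 : 0 ≤ knorm k := Real.sqrt_nonneg _
  have hn2 : (knorm k) ^ 2 = (k.1 : ℝ) ^ 2 + (k.2.1 : ℝ) ^ 2 + (k.2.2 : ℝ) ^ 2 :=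
    Real.sq_sqrt (by positivity)
  have hc2 : (1 : ℝ) ≤ (k.2.2 : ℝ) ^ 2 := by
    have h1 : (1 : ℤ) ≤ k.2.2 ^ 2 := by
      rcases lt_or_gt_of_ne hk with h | h <;> nlinarith
    exact_mod_cast h1
  obtain ⟨H1, H2, H3⟩ := aux_main hn0 hn2 hc2
  have e1 : Mhat1 0 k = ((k.2.1 : ℝ) * (k.2.2 : ℝ) * (knorm k) ^ 2
      - (k.1 : ℝ) * (k.2.2 : ℝ) * (k.2.1 : ℝ) ^ 2) / ((knorm k) ^ 2 * (k.2.2 : ℝ) ^ 2 + (k.2.1 : ℝ) ^ 4) := by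
    simp only [Mhat1, Dnu, zero_mul, add_zero]; ring_nf
  have e2 : Mhat2 0 k = (-(k.1 : ℝ) * (k.2.2 : ℝ) * (knorm k) ^ 2
      - (k.2.1 : ℝ) * (k.2.2 : ℝ) * (k.2.1 : ℝ) ^ 2) / ((knorm k) ^ 2 * (k.2.2 : ℝ) ^ 2 + (k.2.1 : ℝ) ^ 4) := by
    simp only [Mhat2, Dnu, zero_mul, add_zero]; ring_nf
  have e3 : Mhat3 0 k = (((k.1 : ℝ) ^ 2 + (k.2.1 : ℝ) ^ 2) * (k.2.1 : ℝ) ^ 2)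
      / ((knorm k) ^ 2 * (k.2.2 : ℝ) ^ 2 + (k.2.1 : ℝ) ^ 4) := by
    simp only [Mhat3, Dnu, zero_mul, add_zero]; ring_nf
  rw [e1, e2, e3]
  refine ⟨?_, ?_, ?_⟩
  · calc _ ≤ 2 * knorm k := by convert H1 using 3 <;> ring
      _ = 2 * knorm k := rfl
  · calc _ ≤ 2 * knorm k := by convert H2 using 3 <;> ring
      _ = 2 * knorm k := rfl
  · calc _ ≤ 2 * knorm k := by convert H3 using 3 <;> ring
      _ = 2 * knorm k := rfl
end

section
/- For every ν ∈ (0,1] and every k = (k₁,k₂,k₃) ∈ ℤ³ with k₃ ≠ 0, one has |M̂₁^ν(k)| ≤ 3|k|, i.e. |k₂k₃|k|² − k₁k₃(k₂² + ν|k|⁴)| ≤ 3|k| · (|k|²k₃² + (k₂² + ν|k|⁴)²). -/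
lemma aux_bound (ν x y z r : ℝ) (hν0 : 0 < ν) (hr0 : 0 ≤ r)
    (hr2 : r ^ 2 = x ^ 2 + y ^ 2 + z ^ 2) (hz1 : (1 : ℝ) ≤ |z|) :
    |y * z * r ^ 2 - x * z * (y ^ 2 + ν * r ^ 4)|
      ≤ 3 * r * (r ^ 2 * z ^ 2 + (y ^ 2 + ν * r ^ 4) ^ 2) := by
  have hzz : |z| ≤ z ^ 2 := by nlinarith [sq_abs z]
  have hrz : |z| ≤ r := by
    nlinarith [sq_abs z, sq_nonneg x, sq_nonneg y, abs_nonneg z]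
  have hr1 : (1 : ℝ) ≤ r := le_trans hz1 hrz
  have hyx : |y| ≤ r := by
    nlinarith [sq_abs y, sq_nonneg x, sq_nonneg z, abs_nonneg y]
  have hxx : |x| ≤ r := by
    nlinarith [sq_abs x, sq_nonneg y, sq_nonneg z, abs_nonneg x]
  have ha0 : 0 ≤ y ^ 2 + ν * r ^ 4 := by positivity
  have h1 : |y * z * r ^ 2 - x * z * (y ^ 2 + ν * r ^ 4)|
      ≤ |y| * |z| * r ^ 2 + |x| * |z| * (y ^ 2 + ν * r ^ 4) := by
    calc |y * z * r ^ 2 - x * z * (y ^ 2 + ν * r ^ 4)|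
        ≤ |y * z * r ^ 2| + |x * z * (y ^ 2 + ν * r ^ 4)| := abs_sub _ _
      _ = |y| * |z| * r ^ 2 + |x| * |z| * (y ^ 2 + ν * r ^ 4) := by
          rw [abs_mul, abs_mul, abs_mul, abs_mul,
            abs_of_nonneg (by positivity : (0:ℝ) ≤ r ^ 2), abs_of_nonneg ha0]
  have h2 : |y| * |z| * r ^ 2 ≤ r * (r ^ 2 * z ^ 2) := by
    have := mul_le_mul hyx hzz (abs_nonneg z) hr0
    nlinarith [sq_nonneg r]
  have h3 : |x| * |z| * (y ^ 2 + ν * r ^ 4)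
      ≤ r * (r ^ 2 * z ^ 2 + (y ^ 2 + ν * r ^ 4) ^ 2) := by
    have hamgm : r * |z| * (y ^ 2 + ν * r ^ 4)
        ≤ (r ^ 2 * z ^ 2 + (y ^ 2 + ν * r ^ 4) ^ 2) / 2 := by
      nlinarith [sq_nonneg (r * |z| - (y ^ 2 + ν * r ^ 4)), sq_abs z, abs_nonneg z,
        sq_nonneg (r * |z|)]
    have hle : |x| * |z| * (y ^ 2 + ν * r ^ 4) ≤ r * |z| * (y ^ 2 + ν * r ^ 4) :=
      mul_le_mul_of_nonneg_right (mul_le_mul_of_nonneg_right hxx (abs_nonneg z)) ha0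
    nlinarith [sq_nonneg (y ^ 2 + ν * r ^ 4), sq_nonneg (r * z)]
  nlinarith [sq_nonneg (y ^ 2 + ν * r ^ 4), sq_nonneg (r * z)]

theorem stmt2 (ν : ℝ) (hν : ν ∈ Set.Ioc (0 : ℝ) 1) (k : ℤ × ℤ × ℤ)
    (hk3 : k.2.2 ≠ 0) :
    |Mhat1 ν k| ≤ 3 * knorm k ∧
      |(k.2.1 : ℝ) * (k.2.2 : ℝ) * (knorm k) ^ 2
          - (k.1 : ℝ) * (k.2.2 : ℝ) * (((k.2.1 : ℝ)) ^ 2 + ν * (knorm k) ^ 4)|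
        ≤ 3 * knorm k *
          ((knorm k) ^ 2 * ((k.2.2 : ℝ)) ^ 2
            + (((k.2.1 : ℝ)) ^ 2 + ν * (knorm k) ^ 4) ^ 2) := by
  obtain ⟨hν0, hν1⟩ := hν
  have hr0 : 0 ≤ knorm k := Real.sqrt_nonneg _
  have hr2 : (knorm k) ^ 2 = (k.1 : ℝ) ^ 2 + (k.2.1 : ℝ) ^ 2 + (k.2.2 : ℝ) ^ 2 :=
    Real.sq_sqrt (by positivity)
  have hz1 : (1 : ℝ) ≤ |(k.2.2 : ℝ)| := by
    have h : (1 : ℤ) ≤ |k.2.2| := Int.one_le_abs hk3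
    have h2 : ((1 : ℤ) : ℝ) ≤ ((|k.2.2| : ℤ) : ℝ) := by exact_mod_cast h
    simpa [Int.cast_abs] using h2
  have key := aux_bound ν (k.1 : ℝ) (k.2.1 : ℝ) (k.2.2 : ℝ) (knorm k) hν0 hr0 hr2 hz1
  refine ⟨?_, key⟩
  have hD0 : 0 < Dnu ν k := by
    have : (1 : ℝ) ≤ knorm k := by
      calc (1 : ℝ) ≤ |(k.2.2 : ℝ)| := hz1
        _ ≤ knorm k := by
            nlinarith [sq_abs ((k.2.2 : ℝ)), sq_nonneg ((k.1 : ℝ)), sq_nonneg ((k.2.1 : ℝ)),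
              abs_nonneg ((k.2.2 : ℝ))]
    have hz2 : (1 : ℝ) ≤ ((k.2.2 : ℝ)) ^ 2 := by
      nlinarith [abs_nonneg ((k.2.2 : ℝ)), sq_abs ((k.2.2 : ℝ))]
    unfold Dnu
    nlinarith [sq_nonneg (((k.2.1 : ℝ)) ^ 2 + ν * (knorm k) ^ 4)]
  rw [Mhat1, abs_div, abs_of_pos hD0, div_le_iff₀ hD0]
  calc |(k.2.1 : ℝ) * (k.2.2 : ℝ) * (knorm k) ^ 2
        - (k.1 : ℝ) * (k.2.2 : ℝ) * (((k.2.1 : ℝ)) ^ 2 + ν * (knorm k) ^ 4)|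
      ≤ 3 * knorm k *
        ((knorm k) ^ 2 * ((k.2.2 : ℝ)) ^ 2
          + (((k.2.1 : ℝ)) ^ 2 + ν * (knorm k) ^ 4) ^ 2) := key
    _ = 3 * knorm k * Dnu ν k := by rw [Dnu]
end

section
/- For every ν ∈ (0,1] and every k = (k₁,k₂,k₃) ∈ ℤ³ with k₃ ≠ 0, one has |M̂₂^ν(k)| ≤ 3|k|, i.e. |−k₁k₃|k|² − k₂k₃(k₂² + ν|k|⁴)| ≤ 3|k| · (|k|²k₃² + (k₂² + ν|k|⁴)²). -/
private lemma stmt3_aux (ν : ℝ) (hν0 : 0 < ν) (a b c s : ℝ) (hs0 : 0 ≤ s)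
    (hs2 : s ^ 2 = a ^ 2 + b ^ 2 + c ^ 2) (hc1 : (1:ℝ) ≤ c ^ 2) :
    |(-a * c * s ^ 2 - b * c * (b ^ 2 + ν * s ^ 4))|
      ≤ 3 * s * (s ^ 2 * c ^ 2 + (b ^ 2 + ν * s ^ 4) ^ 2) := by
  set B := b ^ 2 + ν * s ^ 4 with hB
  have hs1 : 1 ≤ s := by nlinarith [sq_nonneg a, sq_nonneg b]
  have hBpos : 0 < B := by positivity
  have haa : |a| ≤ s := by
    have := sq_abs a; have := abs_nonneg a; nlinarith [sq_nonneg b]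
  have hbb : |b| ≤ s := by
    have := sq_abs b; have := abs_nonneg b; nlinarith [sq_nonneg a]
  have hcc : |c| ≤ c ^ 2 := by
    have h := sq_abs c; nlinarith [abs_nonneg c]
  have hcs : c ^ 2 ≤ s ^ 2 := by nlinarith [sq_nonneg a, sq_nonneg b]
  have t1 : |a| * |c| * s ^ 2 ≤ s * (s ^ 2 * c ^ 2) := by
    nlinarith [mul_nonneg (mul_nonneg (sub_nonneg.2 haa) (abs_nonneg c)) (sq_nonneg s),
      mul_nonneg (sub_nonneg.2 hcc) (pow_nonneg hs0 3)]
  have t2 : |b| * |c| * B ≤ s * (s ^ 2 * c ^ 2 + B ^ 2) := by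
    nlinarith [mul_nonneg (mul_nonneg (sub_nonneg.2 hbb) (abs_nonneg c)) hBpos.le,
      mul_nonneg (mul_nonneg (sub_nonneg.2 hcc) hs0) hBpos.le,
      mul_nonneg hs0 (sq_nonneg (c ^ 2 - B)),
      mul_nonneg (mul_nonneg hs0 (sub_nonneg.2 hcs)) (sq_nonneg c),
      mul_nonneg hs0 (mul_nonneg (sq_nonneg s) (sq_nonneg c)),
      mul_nonneg hs0 (sq_nonneg B)]
  have tri : |(-a * c * s ^ 2 - b * c * B)| ≤ |a| * |c| * s ^ 2 + |b| * |c| * B := by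
    have h : -a * c * s ^ 2 - b * c * B = -(a * c * s ^ 2 + b * c * B) := by ring
    rw [h, abs_neg]
    calc |a * c * s ^ 2 + b * c * B| ≤ |a * c * s ^ 2| + |b * c * B| := abs_add_le _ _
    _ = |a| * |c| * s ^ 2 + |b| * |c| * B := by
        rw [abs_mul, abs_mul, abs_mul, abs_mul, abs_of_nonneg (sq_nonneg s),
          abs_of_pos hBpos]
  have hrest : 0 ≤ s * (s ^ 2 * c ^ 2) + 2 * (s * B ^ 2) := by positivity
  linarith

theorem stmt3 (ν : ℝ) (hν : ν ∈ Set.Ioc (0 : ℝ) 1) (k : ℤ × ℤ × ℤ)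
    (hk3 : k.2.2 ≠ 0) :
    |Mhat2 ν k| ≤ 3 * knorm k ∧
      |-(k.1 : ℝ) * (k.2.2 : ℝ) * (knorm k) ^ 2
          - (k.2.1 : ℝ) * (k.2.2 : ℝ) * (((k.2.1 : ℝ)) ^ 2 + ν * (knorm k) ^ 4)|
        ≤ 3 * knorm k *
          ((knorm k) ^ 2 * ((k.2.2 : ℝ)) ^ 2
            + (((k.2.1 : ℝ)) ^ 2 + ν * (knorm k) ^ 4) ^ 2) := by
  obtain ⟨hν0, hν1⟩ := hν
  have hc1 : (1:ℝ) ≤ ((k.2.2 : ℝ)) ^ 2 := by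
    have h1 : (1:ℤ) ≤ k.2.2 ^ 2 := by
      rcases lt_or_gt_of_ne hk3 with h | h <;> nlinarith
    exact_mod_cast h1
  have hs0 : 0 ≤ knorm k := Real.sqrt_nonneg _
  have hs2 : knorm k ^ 2 = (k.1:ℝ) ^ 2 + (k.2.1:ℝ) ^ 2 + (k.2.2:ℝ) ^ 2 :=
    Real.sq_sqrt (by positivity)
  have key := stmt3_aux ν hν0 (k.1:ℝ) (k.2.1:ℝ) (k.2.2:ℝ) (knorm k) hs0 hs2 hc1
  refine ⟨?_, key⟩
  have hBpos : 0 < (k.2.1:ℝ) ^ 2 + ν * knorm k ^ 4 := by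
    have hs1 : (1:ℝ) ≤ knorm k := by
      nlinarith [sq_nonneg ((k.1:ℝ)), sq_nonneg ((k.2.1:ℝ))]
    positivity
  have hDpos : 0 < Dnu ν k := by
    unfold Dnu
    positivity
  rw [Mhat2, abs_div, abs_of_pos hDpos, div_le_iff₀ hDpos]
  calc |(-(k.1:ℝ) * (k.2.2:ℝ) * knorm k ^ 2
        - (k.2.1:ℝ) * (k.2.2:ℝ) * ((k.2.1:ℝ) ^ 2 + ν * knorm k ^ 4))|
      ≤ 3 * knorm k * (knorm k ^ 2 * (k.2.2:ℝ) ^ 2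
          + ((k.2.1:ℝ) ^ 2 + ν * knorm k ^ 4) ^ 2) := key
  _ = 3 * knorm k * Dnu ν k := by rw [Dnu]
end

section
/- For every L ≥ 1, every ν ∈ (0,1], and every k = (k₁,k₂,k₃) ∈ ℤ³ with k₃ ≠ 0 and |k| ≤ L, one has |M̂₁^ν(k) − M̂₁⁰(k)| ≤ (4ν L¹⁰ + 2ν² L¹²) |k|. -/
set_option maxHeartbeats 1000000

private lemma mul_abs_le' {x y X Y : ℝ} (hx : |x| ≤ X) (hy : |y| ≤ Y) : |x * y| ≤ X * Y := by
  rw [abs_mul]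
  exact mul_le_mul hx hy (abs_nonneg _) ((abs_nonneg _).trans hx)

theorem stmt10 (L : ℝ) (hL : 1 ≤ L) (ν : ℝ) (hν : ν ∈ Set.Ioc (0 : ℝ) 1)
    (k : ℤ × ℤ × ℤ) (hk3 : k.2.2 ≠ 0) (hkL : knorm k ≤ L) :
    |Mhat1 ν k - Mhat1 0 k| ≤ (4 * ν * L ^ 10 + 2 * ν ^ 2 * L ^ 12) * knorm k := by

  obtain ⟨hν0, hν1⟩ := hν
  set a := (k.1 : ℝ) with ha
  set b := (k.2.1 : ℝ) with hb
  set c := (k.2.2 : ℝ) with hc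
  have hn0 : 0 ≤ knorm k := Real.sqrt_nonneg _
  set n := knorm k with hn
  have hs : n ^ 2 = a ^ 2 + b ^ 2 + c ^ 2 := Real.sq_sqrt (by positivity)
  have hc2 : (1 : ℝ) ≤ c ^ 2 := by
    have h1 : (1 : ℤ) ≤ k.2.2 ^ 2 := by rcases hk3.lt_or_gt with h | h <;> nlinarith
    rw [hc]
    exact_mod_cast h1
  have hn1 : (1 : ℝ) ≤ n := by nlinarith [sq_nonneg a, sq_nonneg b]
  have hna : |a| ≤ n := by nlinarith [sq_abs a, abs_nonneg a, sq_nonneg b, sq_nonneg c]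
  have hnb : |b| ≤ n := by nlinarith [sq_abs b, abs_nonneg b, sq_nonneg a, sq_nonneg c]
  have hnc : |c| ≤ n := by nlinarith [sq_abs c, abs_nonneg c, sq_nonneg a, sq_nonneg b]
  have hDν : (0 : ℝ) < Dnu ν k := by
    unfold Dnu
    rw [← hn, ← hb, ← hc]
    nlinarith [sq_nonneg (b ^ 2 + ν * n ^ 4)]
  have hD0 : (0 : ℝ) < Dnu 0 k := by
    unfold Dnu
    rw [← hn, ← hb, ← hc]
    nlinarith [sq_nonneg (b ^ 2 + 0 * n ^ 4)]
  have hDνn : n ^ 2 ≤ Dnu ν k := by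
    unfold Dnu
    rw [← hn, ← hb, ← hc]
    nlinarith [sq_nonneg (b ^ 2 + ν * n ^ 4)]
  have hD0n : n ^ 2 ≤ Dnu 0 k := by
    unfold Dnu
    rw [← hn, ← hb, ← hc]
    nlinarith [sq_nonneg (b ^ 2 + 0 * n ^ 4)]
  -- bound on E
  have hnn : |n ^ 2| ≤ n ^ 2 := le_of_eq (abs_of_nonneg (sq_nonneg n))
  have hnn4 : |n ^ 4| ≤ n ^ 4 := le_of_eq (abs_of_nonneg (by positivity))
  have hnu : |ν| ≤ ν := le_of_eq (abs_of_nonneg hν0.le)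
  have hb3 : |b ^ 3| ≤ n ^ 3 := by
    rw [abs_pow]; exact pow_le_pow_left₀ (abs_nonneg _) hnb 3
  have hb4 : |b ^ 4| ≤ n ^ 4 := by
    rw [abs_pow]; exact pow_le_pow_left₀ (abs_nonneg _) hnb 4
  have hc3 : |c ^ 3| ≤ n ^ 3 := by
    rw [abs_pow]; exact pow_le_pow_left₀ (abs_nonneg _) hnc 3
  have hb2 : |b ^ 2| ≤ n ^ 2 := by
    rw [abs_pow]; exact pow_le_pow_left₀ (abs_nonneg _) hnb 2
  have ht1 := mul_abs_le' (mul_abs_le' hb3 hnc) hnn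
  have ht2 := mul_abs_le' (mul_abs_le' hna hc3) hnn
  have ht3 := mul_abs_le' (mul_abs_le' hna hnc) hb4
  have ht4 := mul_abs_le' (mul_abs_le' (mul_abs_le' hnu hnb) hnc) (le_of_eq (abs_of_nonneg (by positivity : (0:ℝ) ≤ n ^ 6)))
  have ht5 := mul_abs_le' (mul_abs_le' (mul_abs_le' (mul_abs_le' hnu hna) hb2) hnc) hnn4
  have hE : |c * n ^ 2 * (2 * b ^ 3 + a * c ^ 2) - a * c * b ^ 4
      + ν * n ^ 4 * (b * c * n ^ 2 - a * c * b ^ 2)| ≤ 4 * n ^ 6 + 2 * ν * n ^ 8 := by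
    rw [abs_le]
    obtain ⟨p1, q1⟩ := abs_le.1 ht1
    obtain ⟨p2, q2⟩ := abs_le.1 ht2
    obtain ⟨p3, q3⟩ := abs_le.1 ht3
    obtain ⟨p4, q4⟩ := abs_le.1 ht4
    obtain ⟨p5, q5⟩ := abs_le.1 ht5
    constructor <;> linarith [p1, q1, p2, q2, p3, q3, p4, q4, p5, q5]
  -- main computation
  unfold Mhat1
  rw [← hn, ← ha, ← hb, ← hc]
  rw [div_sub_div _ _ hDν.ne' hD0.ne', abs_div, abs_of_pos (mul_pos hDν hD0),
    div_le_iff₀ (mul_pos hDν hD0)]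
  have hnum : (b * c * n ^ 2 - a * c * (b ^ 2 + ν * n ^ 4)) * Dnu 0 k
      - Dnu ν k * (b * c * n ^ 2 - a * c * (b ^ 2 + 0 * n ^ 4))
      = -(ν * n ^ 4) * (c * n ^ 2 * (2 * b ^ 3 + a * c ^ 2) - a * c * b ^ 4
        + ν * n ^ 4 * (b * c * n ^ 2 - a * c * b ^ 2)) := by
    unfold Dnu
    rw [← hn, ← hb, ← hc]
    ring
  rw [hnum, abs_mul, abs_neg, abs_of_nonneg (by positivity : (0:ℝ) ≤ ν * n ^ 4)]
  have hP : n ^ 2 * n ^ 2 ≤ Dnu ν k * Dnu 0 k :=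
    mul_le_mul hDνn hD0n (sq_nonneg n) ((sq_nonneg n).trans hDνn)
  have h10 : n ^ 10 ≤ L ^ 10 := pow_le_pow_left₀ hn0 hkL 10
  have h12 : n ^ 12 ≤ L ^ 12 := pow_le_pow_left₀ hn0 hkL 12
  have hstep : ν * n ^ 4 * (4 * n ^ 6 + 2 * ν * n ^ 8)
      ≤ (4 * ν * L ^ 10 + 2 * ν ^ 2 * L ^ 12) * n * (Dnu ν k * Dnu 0 k) := by
    have h1 : 4 * ν * n ^ 10 ≤ 4 * ν * L ^ 10 :=
      mul_le_mul_of_nonneg_left h10 (by positivity)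
    have h2 : 2 * ν ^ 2 * n ^ 12 ≤ 2 * ν ^ 2 * L ^ 12 :=
      mul_le_mul_of_nonneg_left h12 (by positivity)
    have h14 : (1 : ℝ) ≤ n ^ 2 * n ^ 2 := by nlinarith [hn1]
    have hDD : (1 : ℝ) ≤ Dnu ν k * Dnu 0 k := h14.trans hP
    have hnP : (1 : ℝ) ≤ n * (Dnu ν k * Dnu 0 k) :=
      hDD.trans (le_mul_of_one_le_left (by linarith) hn1)
    linarith [mul_le_mul_of_nonneg_left hnP (by positivity : (0:ℝ) ≤ 4 * ν * L ^ 10 + 2 * ν ^ 2 * L ^ 12), h1, h2]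
  calc ν * n ^ 4 * |c * n ^ 2 * (2 * b ^ 3 + a * c ^ 2) - a * c * b ^ 4
        + ν * n ^ 4 * (b * c * n ^ 2 - a * c * b ^ 2)|
      ≤ ν * n ^ 4 * (4 * n ^ 6 + 2 * ν * n ^ 8) := by
        exact mul_le_mul_of_nonneg_left hE (by positivity)
    _ ≤ (4 * ν * L ^ 10 + 2 * ν ^ 2 * L ^ 12) * n * (Dnu ν k * Dnu 0 k) := hstep
end

section
/- Let a : ℤ³ → ℂ be a square-summable family (∑_{k ∈ ℤ³} |a(k)|² < ∞) with a(k) = 0 whenever k₃ = 0. Then lim_{ν → 0⁺} ∑_{k ∈ ℤ³, k ≠ 0} ( ∑_{j=1}^{3} |M̂ⱼ^ν(k) − M̂ⱼ⁰(k)|² ) |a(k)|² / |k|² = 0. -/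
lemma knorm_sq (k : ℤ × ℤ × ℤ) :
    knorm k ^ 2 = (k.1 : ℝ) ^ 2 + (k.2.1 : ℝ) ^ 2 + (k.2.2 : ℝ) ^ 2 :=
  Real.sq_sqrt (by positivity)

lemma knorm_nonneg (k : ℤ × ℤ × ℤ) : 0 ≤ knorm k := Real.sqrt_nonneg _

lemma z_sq_ge (k : ℤ × ℤ × ℤ) (hk3 : k.2.2 ≠ 0) : (1:ℝ) ≤ ((k.2.2 : ℤ) : ℝ) ^ 2 := by
  have h : (1:ℤ) ≤ k.2.2 ^ 2 := by rcases hk3.lt_or_gt with h|h <;> nlinarith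
  exact_mod_cast h


set_option maxHeartbeats 1600000 in
lemma bound_arith (x y z r P : ℝ) (hr0 : 0 ≤ r)
    (hr2 : r ^ 2 = x ^ 2 + y ^ 2 + z ^ 2) (hz : 1 ≤ z ^ 2) (hP0 : 0 ≤ P) :
    0 < r ^ 2 * z ^ 2 + P ^ 2 ∧
    |y * z * r ^ 2 - x * z * P| ≤ 2 * r * (r ^ 2 * z ^ 2 + P ^ 2) ∧
    |(-x) * z * r ^ 2 - y * z * P| ≤ 2 * r * (r ^ 2 * z ^ 2 + P ^ 2) ∧
    (x ^ 2 + y ^ 2) * P ≤ 2 * r * (r ^ 2 * z ^ 2 + P ^ 2) := by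
  have hr1 : 1 ≤ r := by nlinarith [sq_nonneg (r - 1), sq_nonneg x, sq_nonneg y]
  have hDpos : 0 < r ^ 2 * z ^ 2 + P ^ 2 := by nlinarith [sq_nonneg P]
  have hx : |x| ≤ r := by
    rw [abs_le]; constructor <;> nlinarith [sq_nonneg (x + r), sq_nonneg (x - r), sq_nonneg y, sq_nonneg z]
  have hy : |y| ≤ r := by
    rw [abs_le]; constructor <;> nlinarith [sq_nonneg (y + r), sq_nonneg (y - r), sq_nonneg x, sq_nonneg z]
  have hz1 : (1:ℝ) ≤ |z| := by nlinarith [abs_nonneg z, sq_abs z]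
  have hzz : |z| ≤ z ^ 2 := by nlinarith [sq_abs z, abs_nonneg z]
  have hkey : |z| * P ≤ r ^ 2 * z ^ 2 + P ^ 2 := by
    nlinarith [sq_nonneg (r * |z| - P), sq_abs z, mul_nonneg (abs_nonneg z) hP0,
      mul_nonneg (mul_nonneg hr0 (abs_nonneg z)) hP0]
  have hkey2 : r * P ≤ r ^ 2 * z ^ 2 + P ^ 2 := by
    have h1 : r * P ≤ r * (|z| * P) :=
      mul_le_mul_of_nonneg_left (le_mul_of_one_le_left hP0 hz1) hr0
    nlinarith [sq_nonneg (r * |z| - P), sq_abs z, mul_nonneg hr0 hP0]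
  refine ⟨hDpos, ?_, ?_, ?_⟩
  · calc |y * z * r ^ 2 - x * z * P| ≤ |y| * |z| * r ^ 2 + |x| * (|z| * P) := by
            have h := abs_sub (y * z * r ^ 2) (x * z * P)
            rw [abs_mul, abs_mul, abs_mul, abs_mul, abs_of_nonneg (by positivity : (0:ℝ) ≤ r ^ 2),
              abs_of_nonneg hP0] at h
            linarith [h]
    _ ≤ r * z ^ 2 * r ^ 2 + r * (r ^ 2 * z ^ 2 + P ^ 2) := by
            have h1 : |y| * |z| * r ^ 2 ≤ r * z ^ 2 * r ^ 2 := by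
              have h := mul_le_mul hy hzz (abs_nonneg z) hr0
              nlinarith [sq_nonneg r]
            have h2 : |x| * (|z| * P) ≤ r * (r ^ 2 * z ^ 2 + P ^ 2) :=
              mul_le_mul hx hkey (mul_nonneg (abs_nonneg z) hP0) hr0
            linarith
    _ ≤ 2 * r * (r ^ 2 * z ^ 2 + P ^ 2) := by nlinarith [mul_nonneg hr0 (sq_nonneg P)]
  · calc |(-x) * z * r ^ 2 - y * z * P| ≤ |x| * |z| * r ^ 2 + |y| * (|z| * P) := by
            have h := abs_sub ((-x) * z * r ^ 2) (y * z * P)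
            rw [abs_mul, abs_mul, abs_mul, abs_mul, abs_neg, abs_of_nonneg (by positivity : (0:ℝ) ≤ r ^ 2),
              abs_of_nonneg hP0] at h
            linarith [h]
    _ ≤ r * z ^ 2 * r ^ 2 + r * (r ^ 2 * z ^ 2 + P ^ 2) := by
            have h1 : |x| * |z| * r ^ 2 ≤ r * z ^ 2 * r ^ 2 := by
              have h := mul_le_mul hx hzz (abs_nonneg z) hr0
              nlinarith [sq_nonneg r]
            have h2 : |y| * (|z| * P) ≤ r * (r ^ 2 * z ^ 2 + P ^ 2) :=
              mul_le_mul hy hkey (mul_nonneg (abs_nonneg z) hP0) hr0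
            linarith
    _ ≤ 2 * r * (r ^ 2 * z ^ 2 + P ^ 2) := by nlinarith [mul_nonneg hr0 (sq_nonneg P)]
  · have h1 : (x ^ 2 + y ^ 2) * P ≤ r ^ 2 * P := by nlinarith [sq_nonneg z]
    have h2 : r ^ 2 * P = r * (r * P) := by ring
    have h3 : r * (r * P) ≤ r * (r ^ 2 * z ^ 2 + P ^ 2) :=
      mul_le_mul_of_nonneg_left hkey2 hr0
    have h4 : r * (r ^ 2 * z ^ 2 + P ^ 2) ≤ 2 * r * (r ^ 2 * z ^ 2 + P ^ 2) := by
      nlinarith [mul_nonneg hr0 hDpos.le]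
    linarith

lemma Dnu_pos (ν : ℝ) (hν : 0 ≤ ν) (k : ℤ × ℤ × ℤ) (hk3 : k.2.2 ≠ 0) : 0 < Dnu ν k :=
  (bound_arith (k.1:ℝ) (k.2.1:ℝ) (k.2.2:ℝ) (knorm k) ((k.2.1:ℝ)^2 + ν * knorm k ^ 4)
    (knorm_nonneg k) (knorm_sq k) (z_sq_ge k hk3) (by positivity)).1

lemma Mhat_le (ν : ℝ) (hν : 0 ≤ ν) (k : ℤ × ℤ × ℤ) (hk3 : k.2.2 ≠ 0) :
    |Mhat1 ν k| ≤ 2 * knorm k ∧ |Mhat2 ν k| ≤ 2 * knorm k ∧ |Mhat3 ν k| ≤ 2 * knorm k := by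
  have hP0 : (0:ℝ) ≤ (k.2.1:ℝ)^2 + ν * knorm k ^ 4 := by positivity
  obtain ⟨hD, h1, h2, h3⟩ := bound_arith (k.1:ℝ) (k.2.1:ℝ) (k.2.2:ℝ) (knorm k)
    ((k.2.1:ℝ)^2 + ν * knorm k ^ 4) (knorm_nonneg k) (knorm_sq k) (z_sq_ge k hk3) hP0
  have hDnu : Dnu ν k = knorm k ^ 2 * (k.2.2:ℝ)^2 + ((k.2.1:ℝ)^2 + ν * knorm k ^ 4)^2 := rfl
  have hDpos : 0 < Dnu ν k := by rw [hDnu]; exact hD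
  refine ⟨?_, ?_, ?_⟩
  · rw [Mhat1, abs_div, abs_of_pos hDpos, div_le_iff₀ hDpos, hDnu]
    exact h1
  · rw [Mhat2, abs_div, abs_of_pos hDpos, div_le_iff₀ hDpos, hDnu]
    exact h2
  · rw [Mhat3, abs_div, abs_of_pos hDpos, div_le_iff₀ hDpos, hDnu]
    rw [abs_of_nonneg (by positivity)]
    exact h3

theorem stmt11 (a : ℤ × ℤ × ℤ → ℂ)
    (ha : Summable fun k : ℤ × ℤ × ℤ => ‖a k‖ ^ 2)
    (ha0 : ∀ k : ℤ × ℤ × ℤ, k.2.2 = 0 → a k = 0) :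
    Filter.Tendsto
      (fun ν : ℝ => ∑' (k : {k : ℤ × ℤ × ℤ // k ≠ 0}),
        ((Mhat1 ν k.1 - Mhat1 0 k.1) ^ 2 + (Mhat2 ν k.1 - Mhat2 0 k.1) ^ 2
          + (Mhat3 ν k.1 - Mhat3 0 k.1) ^ 2) * ‖a k.1‖ ^ 2 / (knorm k.1) ^ 2)
      (nhdsWithin 0 (Set.Ioi 0)) (nhds 0) := by

  set f : ℝ → {k : ℤ × ℤ × ℤ // k ≠ 0} → ℝ := fun ν k =>
    ((Mhat1 ν k.1 - Mhat1 0 k.1) ^ 2 + (Mhat2 ν k.1 - Mhat2 0 k.1) ^ 2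
      + (Mhat3 ν k.1 - Mhat3 0 k.1) ^ 2) * ‖a k.1‖ ^ 2 / (knorm k.1) ^ 2 with hf
  have hsum : Summable (fun k : {k : ℤ × ℤ × ℤ // k ≠ 0} => 48 * ‖a k.1‖ ^ 2) :=
    (ha.subtype _).mul_left 48
  have hlim : ∀ k : {k : ℤ × ℤ × ℤ // k ≠ 0},
      Filter.Tendsto (f · k) (nhdsWithin 0 (Set.Ioi 0)) (nhds 0) := by
    intro k
    by_cases hk3 : k.1.2.2 = 0
    · have hz : ∀ ν : ℝ, f ν k = 0 := by
        intro ν; simp [hf, ha0 k.1 hk3]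
      simpa [hz] using tendsto_const_nhds (α := ℝ) (f := nhdsWithin (0:ℝ) (Set.Ioi 0))
    · have hD0 : Dnu 0 k.1 ≠ 0 := (Dnu_pos 0 le_rfl k.1 hk3).ne'
      have hDc : Filter.Tendsto (fun ν : ℝ => Dnu ν k.1) (nhds 0) (nhds (Dnu 0 k.1)) := by
        have : Continuous (fun ν : ℝ => Dnu ν k.1) := by unfold Dnu; fun_prop
        exact this.tendsto 0
      have hM1 : Filter.Tendsto (fun ν : ℝ => Mhat1 ν k.1) (nhds 0) (nhds (Mhat1 0 k.1)) := by
        unfold Mhat1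
        exact Filter.Tendsto.div ((by fun_prop : Continuous fun ν : ℝ =>
          (k.1.2.1 : ℝ) * (k.1.2.2 : ℝ) * (knorm k.1) ^ 2
            - (k.1.1 : ℝ) * (k.1.2.2 : ℝ) * (((k.1.2.1 : ℝ)) ^ 2 + ν * (knorm k.1) ^ 4)).tendsto 0)
          hDc hD0
      have hM2 : Filter.Tendsto (fun ν : ℝ => Mhat2 ν k.1) (nhds 0) (nhds (Mhat2 0 k.1)) := by
        unfold Mhat2
        exact Filter.Tendsto.div ((by fun_prop : Continuous fun ν : ℝ =>
          -(k.1.1 : ℝ) * (k.1.2.2 : ℝ) * (knorm k.1) ^ 2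
            - (k.1.2.1 : ℝ) * (k.1.2.2 : ℝ) * (((k.1.2.1 : ℝ)) ^ 2 + ν * (knorm k.1) ^ 4)).tendsto 0)
          hDc hD0
      have hM3 : Filter.Tendsto (fun ν : ℝ => Mhat3 ν k.1) (nhds 0) (nhds (Mhat3 0 k.1)) := by
        unfold Mhat3
        exact Filter.Tendsto.div ((by fun_prop : Continuous fun ν : ℝ =>
          ((k.1.1 : ℝ) ^ 2 + (k.1.2.1 : ℝ) ^ 2) * (((k.1.2.1 : ℝ)) ^ 2 + ν * (knorm k.1) ^ 4)).tendsto 0)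
          hDc hD0
      have h : Filter.Tendsto (fun ν : ℝ =>
          ((Mhat1 ν k.1 - Mhat1 0 k.1) ^ 2 + (Mhat2 ν k.1 - Mhat2 0 k.1) ^ 2
            + (Mhat3 ν k.1 - Mhat3 0 k.1) ^ 2) * ‖a k.1‖ ^ 2 / (knorm k.1) ^ 2) (nhds 0)
          (nhds (((Mhat1 0 k.1 - Mhat1 0 k.1) ^ 2 + (Mhat2 0 k.1 - Mhat2 0 k.1) ^ 2
            + (Mhat3 0 k.1 - Mhat3 0 k.1) ^ 2) * ‖a k.1‖ ^ 2 / (knorm k.1) ^ 2)) :=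
        ((((hM1.sub tendsto_const_nhds).pow 2).add
          ((hM2.sub tendsto_const_nhds).pow 2)).add
          ((hM3.sub tendsto_const_nhds).pow 2)).mul_const (‖a k.1‖ ^ 2) |>.div_const ((knorm k.1) ^ 2)
      have h0 : ((Mhat1 0 k.1 - Mhat1 0 k.1) ^ 2 + (Mhat2 0 k.1 - Mhat2 0 k.1) ^ 2
          + (Mhat3 0 k.1 - Mhat3 0 k.1) ^ 2) * ‖a k.1‖ ^ 2 / (knorm k.1) ^ 2 = 0 := by
        simp
      rw [h0] at h
      exact h.mono_left nhdsWithin_le_nhds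
  have hbound : ∀ᶠ ν in nhdsWithin (0:ℝ) (Set.Ioi 0), ∀ k : {k : ℤ × ℤ × ℤ // k ≠ 0},
      ‖f ν k‖ ≤ 48 * ‖a k.1‖ ^ 2 := by
    filter_upwards [self_mem_nhdsWithin] with ν hν k
    have hν0 : (0:ℝ) ≤ ν := le_of_lt hν
    have hfnn : 0 ≤ f ν k := by
      rw [hf]
      positivity
    rw [Real.norm_eq_abs, abs_of_nonneg hfnn]
    by_cases hk3 : k.1.2.2 = 0
    · simp [hf, ha0 k.1 hk3]
      try positivity
    · obtain ⟨b1, b2, b3⟩ := Mhat_le ν hν0 k.1 hk3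
      obtain ⟨c1, c2, c3⟩ := Mhat_le 0 le_rfl k.1 hk3
      set r := knorm k.1 with hr
      have hr0 : 0 ≤ r := knorm_nonneg k.1
      have hr1 : 1 ≤ r := by
        have hz := z_sq_ge k.1 hk3
        have h2 := knorm_sq k.1
        nlinarith [sq_nonneg (r - 1), sq_nonneg ((k.1.1:ℝ)), sq_nonneg ((k.1.2.1:ℝ))]
      have hr2pos : (0:ℝ) < r ^ 2 := by positivity
      have key : (Mhat1 ν k.1 - Mhat1 0 k.1) ^ 2 + (Mhat2 ν k.1 - Mhat2 0 k.1) ^ 2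
          + (Mhat3 ν k.1 - Mhat3 0 k.1) ^ 2 ≤ 48 * r ^ 2 := by
        have d1 : |Mhat1 ν k.1 - Mhat1 0 k.1| ≤ 4 * r := by
          calc |Mhat1 ν k.1 - Mhat1 0 k.1| ≤ |Mhat1 ν k.1| + |Mhat1 0 k.1| := abs_sub _ _
          _ ≤ 4 * r := by linarith
        have d2 : |Mhat2 ν k.1 - Mhat2 0 k.1| ≤ 4 * r := by
          calc |Mhat2 ν k.1 - Mhat2 0 k.1| ≤ |Mhat2 ν k.1| + |Mhat2 0 k.1| := abs_sub _ _
          _ ≤ 4 * r := by linarith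
        have d3 : |Mhat3 ν k.1 - Mhat3 0 k.1| ≤ 4 * r := by
          calc |Mhat3 ν k.1 - Mhat3 0 k.1| ≤ |Mhat3 ν k.1| + |Mhat3 0 k.1| := abs_sub _ _
          _ ≤ 4 * r := by linarith
        have e1 : (Mhat1 ν k.1 - Mhat1 0 k.1) ^ 2 ≤ 16 * r ^ 2 := by
          nlinarith [sq_abs (Mhat1 ν k.1 - Mhat1 0 k.1), abs_nonneg (Mhat1 ν k.1 - Mhat1 0 k.1)]
        have e2 : (Mhat2 ν k.1 - Mhat2 0 k.1) ^ 2 ≤ 16 * r ^ 2 := by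
          nlinarith [sq_abs (Mhat2 ν k.1 - Mhat2 0 k.1), abs_nonneg (Mhat2 ν k.1 - Mhat2 0 k.1)]
        have e3 : (Mhat3 ν k.1 - Mhat3 0 k.1) ^ 2 ≤ 16 * r ^ 2 := by
          nlinarith [sq_abs (Mhat3 ν k.1 - Mhat3 0 k.1), abs_nonneg (Mhat3 ν k.1 - Mhat3 0 k.1)]
        linarith
      rw [hf]
      rw [div_le_iff₀ hr2pos]
      calc ((Mhat1 ν k.1 - Mhat1 0 k.1) ^ 2 + (Mhat2 ν k.1 - Mhat2 0 k.1) ^ 2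
            + (Mhat3 ν k.1 - Mhat3 0 k.1) ^ 2) * ‖a k.1‖ ^ 2
          ≤ 48 * r ^ 2 * ‖a k.1‖ ^ 2 := by
            exact mul_le_mul_of_nonneg_right key (by positivity)
        _ = 48 * ‖a k.1‖ ^ 2 * r ^ 2 := by ring
  have := tendsto_tsum_of_dominated_convergence (f := f)
    (g := fun _ : {k : ℤ × ℤ × ℤ // k ≠ 0} => (0:ℝ))
    (bound := fun k => 48 * ‖a k.1‖ ^ 2) hsum hlim hbound
  simpa using this
end
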